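/- Let p, q > 1, φ(t) = log(1+t^q)·t^{p−1} for t ≥ 0, and Φ(t) = ∫₀^t φ(s) ds. Then t·φ(t) ≤ (p+q)·Φ(t) for all t ≥ 0. -/

import Mathlib

open Real

/-- From concavity of `log`: for `0 < a ≤ b`, `a * log (1+b) ≤ b * log (1+a)`. -/
lemma aux_log_div_antitone (a b : ℝ) (ha : 0 < a) (hab : a ≤ b) :
    a * Real.log (1 + b) ≤ b * Real.log (1 + a) := by
  have hb : 0 < b := lt_of_lt_of_le ha hab
  have hconc := strictConcaveOn_log_Ioi.concaveOn
  have h1b : (1 + b) ∈ Set.Ioi (0:ℝ) := by simp; linarith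
  have h1 : (1:ℝ) ∈ Set.Ioi (0:ℝ) := by simp
  have hl : 0 ≤ a / b := by positivity
  have hm : 0 ≤ 1 - a / b := by
    have : a / b ≤ 1 := (div_le_one hb).mpr hab
    linarith
  have hsum : a / b + (1 - a / b) = 1 := by ring
  have := hconc.2 h1b h1 hl hm hsum
  simp only [smul_eq_mul, Real.log_one, mul_zero, add_zero] at this
  have heq : a / b * (1 + b) + (1 - a / b) * 1 = 1 + a := by
    field_simp; ring
  rw [heq] at this
  calc a * Real.log (1 + b) = b * (a / b * Real.log (1 + b)) := by
        field_simp
    _ ≤ b * Real.log (1 + a) := by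
        exact mul_le_mul_of_nonneg_left this hb.le

theorem stmt_10 (p q : ℝ) (hp : 1 < p) (hq : 1 < q) :
    ∀ t : ℝ, 0 ≤ t →
      t * (Real.log (1 + t ^ q) * t ^ (p - 1)) ≤
        (p + q) * ∫ s in (0:ℝ)..t, Real.log (1 + s ^ q) * s ^ (p - 1) := by
  intro t ht
  rcases eq_or_lt_of_le ht with h0 | ht'
  · simp [← h0]
  have hq0 : (0:ℝ) < q := by linarith
  have hpq : (0:ℝ) < p + q - 1 := by linarith
  have htq : 0 < t ^ q := Real.rpow_pos_of_pos ht' q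
  set c : ℝ := Real.log (1 + t ^ q) / t ^ q with hc_def
  have hlognn : 0 ≤ Real.log (1 + t ^ q) := Real.log_nonneg (by linarith)
  have hc : 0 ≤ c := div_nonneg hlognn htq.le
  -- pointwise bound
  have key : ∀ s ∈ Set.Icc (0:ℝ) t,
      c * s ^ (p + q - 1) ≤ Real.log (1 + s ^ q) * s ^ (p - 1) := by
    intro s hs
    rcases eq_or_lt_of_le hs.1 with h0 | hs'
    · rw [← h0]
      rw [Real.zero_rpow (by linarith : p + q - 1 ≠ 0),
        Real.zero_rpow (by linarith : q ≠ 0)]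
      simp
    · have hsq : 0 < s ^ q := Real.rpow_pos_of_pos hs' q
      have h1 : s ^ q ≤ t ^ q := Real.rpow_le_rpow hs'.le hs.2 hq0.le
      have h2 : s ^ q * Real.log (1 + t ^ q) ≤ t ^ q * Real.log (1 + s ^ q) :=
        aux_log_div_antitone _ _ hsq h1
      have h3 : c * s ^ q ≤ Real.log (1 + s ^ q) := by
        rw [hc_def, div_mul_eq_mul_div, div_le_iff₀ htq]
        nlinarith
      have hsp : (0:ℝ) ≤ s ^ (p - 1) := Real.rpow_nonneg hs'.le _
      calc c * s ^ (p + q - 1) = (c * s ^ q) * s ^ (p - 1) := by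
            rw [show p + q - 1 = q + (p - 1) by ring, Real.rpow_add hs']
            ring
        _ ≤ Real.log (1 + s ^ q) * s ^ (p - 1) :=
            mul_le_mul_of_nonneg_right h3 hsp
  -- continuity / integrability
  have crq : ∀ r : ℝ, 0 < r → ContinuousOn (fun s : ℝ => s ^ r) (Set.Icc 0 t) := by
    intro r hr s _
    exact (Real.continuousAt_rpow_const s r (Or.inr hr.le)).continuousWithinAt
  have hlogc : ContinuousOn (fun s : ℝ => Real.log (1 + s ^ q)) (Set.Icc 0 t) := by
    apply ContinuousOn.log (continuousOn_const.add (crq q hq0))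
    intro s hs
    have : 0 ≤ s ^ q := Real.rpow_nonneg hs.1 q
    intro hcon; simp only [Pi.add_apply] at hcon; linarith
  have hint1 : IntervalIntegrable (fun s : ℝ => c * s ^ (p + q - 1))
      MeasureTheory.volume 0 t := by
    apply ContinuousOn.intervalIntegrable
    rw [Set.uIcc_of_le ht]
    exact continuousOn_const.mul (crq _ hpq)
  have hint2 : IntervalIntegrable (fun s : ℝ => Real.log (1 + s ^ q) * s ^ (p - 1))
      MeasureTheory.volume 0 t := by
    apply ContinuousOn.intervalIntegrable
    rw [Set.uIcc_of_le ht]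
    exact hlogc.mul (crq _ (by linarith))
  have hmono := intervalIntegral.integral_mono_on ht hint1 hint2 key
  -- compute the lower integral
  have hval : (∫ s in (0:ℝ)..t, c * s ^ (p + q - 1)) = c * (t ^ (p + q) / (p + q)) := by
    rw [intervalIntegral.integral_const_mul, integral_rpow (Or.inl (by linarith))]
    rw [Real.zero_rpow (by linarith : p + q - 1 + 1 ≠ 0)]
    ring_nf
  rw [hval] at hmono
  have hfin : t * (Real.log (1 + t ^ q) * t ^ (p - 1)) = (p + q) * (c * (t ^ (p + q) / (p + q))) := by
    rw [hc_def, show p + q = q + (1 + (p - 1)) by ring, Real.rpow_add ht',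
      Real.rpow_add ht', Real.rpow_one]
    have hne : q + (1 + (p - 1)) ≠ 0 := ne_of_gt (by linarith)
    field_simp
  rw [hfin]
  have hpq0 : (0:ℝ) < p + q := by linarith
  exact mul_le_mul_of_nonneg_left hmono hpq0.le
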